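/- arXiv:2004.01149 — 2 statements merged into one kernel-verified Lean document; each statement's English description precedes it below -/
import Mathlib

section
/- Consider generalised scale-free percolation SFP on ℤ^d whose vertex-weight distribution W has power-law tails with exponent τ ∈ (1,3) and whose connection function h satisfies the edge-connection bounds with long-range parameter α ∈ (0,1]. Let the penalty function be f(w₁,w₂) = (w₁w₂)^μ for some μ > 0. Then explosion occurs almost surely, P(Y_f(0) < ∞) = 1, and it is sideways explosion: there exists T < ∞ such that with positive probability the origin is incident to infinitely many edges of cost at most T, i.e. P(N₁^T(0) = ∞) > 0. -/
open MeasureTheory ProbabilityTheory Filter Set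
open scoped ENNReal NNReal

noncomputable section

namespace SFP

/-- Euclidean norm on `ℝ^d` (realised as `Fin d → ℝ`). -/
def rnorm {d : ℕ} (x : Fin d → ℝ) : ℝ := Real.sqrt (∑ i, x i ^ 2)

/-- Euclidean norm of an integer vector in `ℤ^d`. -/
def znorm {d : ℕ} (x : Fin d → ℤ) : ℝ := rnorm fun i => (x i : ℝ)

/-- A function varies slowly at infinity. -/
def SlowlyVarying (l : ℝ → ℝ) : Prop :=
  ∀ c : ℝ, 0 < c → Tendsto (fun x => l (c * x) / l x) atTop (nhds 1)

/-- `l(w) = exp (-c₂ (log w)^γ)`. -/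
def lfun (c₂ γ w : ℝ) : ℝ := Real.exp (-c₂ * Real.log w ^ γ)

/-- Edge-connection bounds, with explicit constants, for long-range parameter `α ∈ (0,∞]`. -/
def EdgeBoundsC {d : ℕ} (h : (Fin d → ℝ) → ℝ → ℝ → ℝ) (α : ℝ≥0∞)
    (γ cl cu cl1 cu1 c₂ : ℝ) : Prop :=
  γ ∈ Set.Ioo (0 : ℝ) 1 ∧ 0 < cl ∧ 0 < cu ∧ 0 < cl1 ∧ 0 < cu1 ∧ 0 < c₂ ∧
    ((α ≠ ⊤ ∧ ∀ x : Fin d → ℝ, x ≠ 0 → ∀ w₁ w₂ : ℝ, 1 ≤ w₁ → 1 ≤ w₂ →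
        cl * min (lfun c₂ γ w₁ * lfun c₂ γ w₂)
            ((w₁ * w₂ / rnorm x ^ d) ^ α.toReal) ≤ h x w₁ w₂ ∧
          h x w₁ w₂ ≤ cu * min 1 ((w₁ * w₂ / rnorm x ^ d) ^ α.toReal)) ∨
      (α = ⊤ ∧ ∀ x : Fin d → ℝ, x ≠ 0 → ∀ w₁ w₂ : ℝ, 1 ≤ w₁ → 1 ≤ w₂ →
        cl * min (lfun c₂ γ w₁ * lfun c₂ γ w₂)
            (if rnorm x ^ d ≤ cl1 * (w₁ * w₂) then 1 else 0) ≤ h x w₁ w₂ ∧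
          h x w₁ w₂ ≤ cu * (if rnorm x ^ d ≤ cu1 * (w₁ * w₂) then 1 else 0)))

/-- Edge-connection bounds with long-range parameter `α ∈ (0,∞]`. -/
def EdgeBounds {d : ℕ} (h : (Fin d → ℝ) → ℝ → ℝ → ℝ) (α : ℝ≥0∞) : Prop :=
  ∃ γ cl cu cl1 cu1 c₂ : ℝ, EdgeBoundsC h α γ cl cu cl1 cu1 c₂

/-- The random variable `W` has power-law tails with exponent `τ` under `P`. -/
def PowerLawTails {Ω : Type*} [MeasurableSpace Ω] (P : Measure Ω) (W : Ω → ℝ)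
    (τ : ℝ) : Prop :=
  ∃ l : ℝ → ℝ, (∀ x : ℝ, 0 < x → 0 < l x) ∧ SlowlyVarying l ∧
    ∃ x₀ : ℝ, ∀ x : ℝ, x₀ ≤ x → (P {ω | x ≤ W ω}).toReal = l x * x ^ (-(τ - 1))

/-- The ratio `log F(t) / log t`, valued in `[0,∞]` (it equals `∞` when `F t = 0` and
`0 < t < 1`, matching the convention `log 0 = -∞`). -/
def betaRatio (F : ℝ → ℝ) (t : ℝ) : ℝ≥0∞ :=
  (if F t = 0 then ⊤ else ENNReal.ofReal (-Real.log (F t))) / ENNReal.ofReal (-Real.log t)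

/-- `β⁺ = limsup_{t↓0} log F(t)/log t ∈ [0,∞]`. -/
def betaPlus (F : ℝ → ℝ) : ℝ≥0∞ := limsup (betaRatio F) (nhdsWithin 0 (Set.Ioi 0))

/-- `β⁻ = liminf_{t↓0} log F(t)/log t ∈ [0,∞]`. -/
def betaMinus (F : ℝ → ℝ) : ℝ≥0∞ := liminf (betaRatio F) (nhdsWithin 0 (Set.Ioi 0))

/-- All the data of generalised scale-free percolation on `ℤ^d`:
a probability space, prototype weight and length variables `W, L`, a connection
function `h`, i.i.d. vertex weights `Wt`, i.i.d. uniform variables `U` and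
i.i.d. edge lengths `Len` indexed by unordered pairs of vertices. -/
structure Data (d : ℕ) (Ω : Type*) [MeasurableSpace Ω] where
  P : Measure Ω
  W : Ω → ℝ
  L : Ω → ℝ
  h : (Fin d → ℝ) → ℝ → ℝ → ℝ
  Wt : (Fin d → ℤ) → Ω → ℝ
  U : Sym2 (Fin d → ℤ) → Ω → ℝ
  Len : Sym2 (Fin d → ℤ) → Ω → ℝ

/-- Index type for the combined family of basic random variables. -/
inductive Idx (d : ℕ) : Type
  | wt : (Fin d → ℤ) → Idx d
  | unif : Sym2 (Fin d → ℤ) → Idx d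
  | len : Sym2 (Fin d → ℤ) → Idx d

variable {d : ℕ} {Ω : Type*} [MeasurableSpace Ω]

/-- The combined family of basic random variables. -/
def Data.family (M : Data d Ω) : Idx d → Ω → ℝ
  | .wt v => M.Wt v
  | .unif e => M.U e
  | .len e => M.Len e

/-- The model assumptions of generalised scale-free percolation: `P` is a probability
measure; `W ≥ 1` and `L ≥ 0`; `h` takes values in `[0,1]`; the weights are distributed
as `W`, the pair variables are uniform on `[0,1]`, the edge lengths are distributed as
`L`, and all these random variables are mutually independent. -/
def Data.Valid (M : Data d Ω) : Prop :=
  IsProbabilityMeasure M.P ∧ Measurable M.W ∧ Measurable M.L ∧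
    (∀ ω, 1 ≤ M.W ω) ∧ (∀ ω, 0 ≤ M.L ω) ∧
    (∀ x w₁ w₂, M.h x w₁ w₂ ∈ Set.Icc (0 : ℝ) 1) ∧
    (∀ i, Measurable (M.family i)) ∧
    (∀ v ω, 1 ≤ M.Wt v ω) ∧ (∀ e ω, 0 ≤ M.Len e ω) ∧
    (∀ v, Measure.map (M.Wt v) M.P = Measure.map M.W M.P) ∧
    (∀ e : Sym2 (Fin d → ℤ), ¬e.IsDiag →
      Measure.map (M.U e) M.P = volume.restrict (Set.Icc (0 : ℝ) 1)) ∧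
    (∀ e : Sym2 (Fin d → ℤ), ¬e.IsDiag →
      Measure.map (M.Len e) M.P = Measure.map M.L M.P) ∧
    iIndepFun M.family M.P

/-- Adjacency in the random graph at sample point `ω`: nearest-neighbour edges are
always present, and an edge between `u,v` with `‖u-v‖ > 1` is present iff the
attached uniform variable is at most `h (u-v) W_u W_v`. -/
def Data.Adj (M : Data d Ω) (ω : Ω) (u v : Fin d → ℤ) : Prop :=
  znorm (u - v) = 1 ∨
    (1 < znorm (u - v) ∧
      M.U s(u, v) ω ≤ M.h (fun i => ((u - v) i : ℝ)) (M.Wt u ω) (M.Wt v ω))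

/-- Cost of traversing the edge `{u,v}` from `u` to `v`, for penalty function `f`. -/
def Data.cost (M : Data d Ω) (f : ℝ → ℝ → ℝ) (ω : Ω) (u v : Fin d → ℤ) : ℝ :=
  M.Len s(u, v) ω * f (M.Wt u ω) (M.Wt v ω)

/-- `π` restricted to `{0,…,k}` is a self-avoiding path in the graph at `ω`. -/
def Data.IsPathSeg (M : Data d Ω) (ω : Ω) (k : ℕ) (π : ℕ → Fin d → ℤ) : Prop :=
  (∀ i, i < k → M.Adj ω (π i) (π (i + 1))) ∧
    ∀ i j, i ≤ k → j ≤ k → π i = π j → i = j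

/-- Total cost of the first `k` steps of `π`. -/
def Data.pathCost (M : Data d Ω) (f : ℝ → ℝ → ℝ) (ω : Ω) (k : ℕ)
    (π : ℕ → Fin d → ℤ) : ℝ≥0∞ :=
  ∑ i ∈ Finset.range k, ENNReal.ofReal (M.cost f ω (π i) (π (i + 1)))

/-- Cost-distance from `u` to `v`: the infimum of costs of paths from `u` to `v`. -/
def Data.costDist (M : Data d Ω) (f : ℝ → ℝ → ℝ) (ω : Ω) (u v : Fin d → ℤ) : ℝ≥0∞ :=
  ⨅ (k : ℕ) (π : ℕ → Fin d → ℤ) (_ : π 0 = u) (_ : π k = v)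
    (_ : M.IsPathSeg ω k π), M.pathCost f ω k π

/-- Explosion time `Y_f(v) = lim_{k→∞} inf { t : |B^{f,L}(v,t)| > k }`. -/
def Data.explosionTime (M : Data d Ω) (f : ℝ → ℝ → ℝ) (ω : Ω) (v : Fin d → ℤ) : ℝ≥0∞ :=
  ⨆ k : ℕ, sInf {t : ℝ≥0∞ |
    ∃ S : Finset (Fin d → ℤ), k < S.card ∧ ∀ u ∈ S, M.costDist f ω v u ≤ t}

/-- `π` is an infinite self-avoiding path starting at `v₀` in the graph at `ω`. -/
def Data.InfPath (M : Data d Ω) (ω : Ω) (v₀ : Fin d → ℤ) (π : ℕ → Fin d → ℤ) : Prop :=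
  π 0 = v₀ ∧ Function.Injective π ∧ ∀ i, M.Adj ω (π i) (π (i + 1))

/-- Total cost of an infinite path. -/
def Data.infPathCost (M : Data d Ω) (f : ℝ → ℝ → ℝ) (ω : Ω)
    (π : ℕ → Fin d → ℤ) : ℝ≥0∞ :=
  ∑' i, ENNReal.ofReal (M.cost f ω (π i) (π (i + 1)))

/-- The set of neighbours of `v` joined to `v` by an edge of cost at most `t`;
`N₁^t(v)` is its cardinality. -/
def Data.cheapNbrs (M : Data d Ω) (f : ℝ → ℝ → ℝ) (ω : Ω) (v : Fin d → ℤ)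
    (t : ℝ) : Set (Fin d → ℤ) :=
  {u | M.Adj ω v u ∧ M.cost f ω v u ≤ t}

/-- Cumulative distribution function `F_L` of the edge-length variable `L`. -/
def Data.cdf (M : Data d Ω) : ℝ → ℝ := fun t => (M.P {ω | M.L ω ≤ t}).toReal

/-- `f` is the polynomial penalty function with coefficients `a` and exponents
`μe, νe` over the finite index set `I`. -/
def IsPolyPenalty {ι : Type} (f : ℝ → ℝ → ℝ) (I : Finset ι) (a μe νe : ι → ℝ) : Prop :=
  I.Nonempty ∧ (∀ i ∈ I, 0 < a i ∧ 0 ≤ μe i ∧ 0 ≤ νe i) ∧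
    ∀ w₁ w₂ : ℝ, 1 ≤ w₁ → 1 ≤ w₂ → f w₁ w₂ = ∑ i ∈ I, a i * w₁ ^ μe i * w₂ ^ νe i

/-- `degf` is the degree `max_{i∈I} (μ_i + ν_i)` of the polynomial penalty. -/
def IsPolyDeg {ι : Type} (I : Finset ι) (μe νe : ι → ℝ) (degf : ℝ) : Prop :=
  (∀ i ∈ I, μe i + νe i ≤ degf) ∧ ∃ i ∈ I, μe i + νe i = degf

end SFP

section Aux

open SFP MeasureTheory ProbabilityTheory Filter Set
open scoped ENNReal

namespace SFPAux

variable {d : ℕ}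

lemma znorm_nonneg (x : Fin d → ℤ) : 0 ≤ znorm x := Real.sqrt_nonneg _

lemma znorm_sub_comm (u v : Fin d → ℤ) : znorm (u - v) = znorm (v - u) := by
  unfold znorm rnorm
  congr 1
  refine Finset.sum_congr rfl fun i _ => ?_
  show ((u - v) i : ℝ)^2 = ((v - u) i : ℝ)^2
  simp only [Pi.sub_apply]
  push_cast
  ring

lemma znorm_zero_sub (x : Fin d → ℤ) : znorm (0 - x) = znorm x := by
  rw [znorm_sub_comm, sub_zero]

lemma one_le_znorm {x : Fin d → ℤ} (hx : x ≠ 0) : 1 ≤ znorm x := by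
  obtain ⟨i, hi⟩ : ∃ i, x i ≠ 0 := by
    by_contra h; push_neg at h; exact hx (funext h)
  have h0 : (1 : ℤ) ≤ |x i| := Int.one_le_abs hi
  have h1 : (1:ℝ) ≤ ((x i : ℝ))^2 := by
    have h2 : (1:ℝ) ≤ |(x i : ℝ)| := by
      rw [← Int.cast_abs]
      exact_mod_cast h0
    nlinarith [sq_abs ((x i : ℝ))]
  have h2 : (1:ℝ) ≤ ∑ j, ((x j:ℝ))^2 :=
    le_trans h1 (Finset.single_le_sum (f := fun j => ((x j:ℝ))^2)
      (fun j _ => sq_nonneg _) (Finset.mem_univ i))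
  calc (1:ℝ) = Real.sqrt 1 := Real.sqrt_one.symm
  _ ≤ znorm x := Real.sqrt_le_sqrt h2

lemma abs_coord_le_znorm (x : Fin d → ℤ) (i : Fin d) : |(x i : ℝ)| ≤ znorm x := by
  have h : ((x i:ℝ))^2 ≤ ∑ j, ((x j:ℝ))^2 :=
    Finset.single_le_sum (f := fun j => ((x j:ℝ))^2)
      (fun j _ => sq_nonneg _) (Finset.mem_univ i)
  calc |(x i:ℝ)| = Real.sqrt (((x i:ℝ))^2) := (Real.sqrt_sq_eq_abs _).symm
  _ ≤ znorm x := Real.sqrt_le_sqrt h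

lemma znorm_le_of_abs_le {x : Fin d → ℤ} {m : ℝ} (hm : 0 ≤ m) (h : ∀ i, |(x i:ℝ)| ≤ m) :
    znorm x ≤ Real.sqrt d * m := by
  have hsum : ∑ j, ((x j:ℝ))^2 ≤ (d : ℝ) * m^2 := by
    calc ∑ j, ((x j:ℝ))^2 ≤ ∑ _j : Fin d, m^2 :=
          Finset.sum_le_sum (fun j _ => by nlinarith [h j, abs_nonneg ((x j:ℝ)), sq_abs ((x j:ℝ))])
    _ = (d : ℝ) * m^2 := by simp [Finset.sum_const, Finset.card_univ, nsmul_eq_mul]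
  calc znorm x ≤ Real.sqrt ((d:ℝ) * m^2) := Real.sqrt_le_sqrt hsum
  _ = Real.sqrt d * m := by
      rw [Real.sqrt_mul (by positivity), Real.sqrt_sq hm]

lemma finite_ball (R : ℝ) : {x : Fin d → ℤ | znorm x ≤ R}.Finite := by
  have hsub : {x : Fin d → ℤ | znorm x ≤ R} ⊆
      Set.pi Set.univ (fun _ : Fin d => Set.Icc (-⌈R⌉) ⌈R⌉) := by
    intro x hx i _
    have h1 : |(x i:ℝ)| ≤ R := le_trans (abs_coord_le_znorm x i) hx
    have h2 : |((x i : ℤ) : ℝ)| ≤ (⌈R⌉ : ℝ) := le_trans h1 (Int.le_ceil R)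
    have h3 : |x i| ≤ ⌈R⌉ := by
      rw [← Int.cast_abs] at h2
      exact_mod_cast h2
    exact Set.mem_Icc.2 (abs_le.1 h3)
  exact Set.Finite.subset (Set.Finite.pi (fun _ => Set.finite_Icc _ _)) hsub

lemma lfun_pos (c₂ γ w : ℝ) : 0 < lfun c₂ γ w := Real.exp_pos _

lemma lfun_antitone {c₂ γ : ℝ} (hc2 : 0 ≤ c₂) (hγ : 0 ≤ γ) {a b : ℝ} (ha : 1 ≤ a)
    (hab : a ≤ b) : lfun c₂ γ b ≤ lfun c₂ γ a := by
  unfold lfun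
  apply Real.exp_le_exp.2
  have h1 : Real.log a ^ γ ≤ Real.log b ^ γ :=
    Real.rpow_le_rpow (Real.log_nonneg ha) (Real.log_le_log (by linarith) hab) hγ
  nlinarith

lemma exists_level {Ω : Type*} [MeasurableSpace Ω] (P : Measure Ω)
    [IsProbabilityMeasure P] (W : Ω → ℝ) (c : ℝ) :
    ∃ w : ℝ, c ≤ w ∧ 0 < P {ω | W ω ≤ w} := by
  by_contra h
  push_neg at h
  have h0 : ∀ n : ℕ, P {ω | W ω ≤ c + n} = 0 := fun n =>
    le_antisymm (h _ (le_add_of_nonneg_right (Nat.cast_nonneg n))) zero_le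
  have hμ : P (⋃ n : ℕ, {ω | W ω ≤ c + n}) = 0 := measure_iUnion_null h0
  have huniv : (⋃ n : ℕ, {ω | W ω ≤ c + n}) = Set.univ := by
    ext ω
    simp only [Set.mem_iUnion, Set.mem_setOf_eq, Set.mem_univ, iff_true]
    obtain ⟨n, hn⟩ := exists_nat_ge (W ω - c)
    exact ⟨n, by linarith⟩
  rw [huniv, measure_univ] at hμ
  exact one_ne_zero hμ

lemma indep_triples {Ω' ι : Type*} [MeasurableSpace Ω'] [DecidableEq ι] {μ : Measure Ω'}
    {F : ι → Ω' → ℝ} (hF : iIndepFun F μ)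
    (hFm : ∀ i, Measurable (F i))
    {i1 i2 i3 : ℕ → ι} {B : ι → Set ℝ} (hB : ∀ i, MeasurableSet (B i))
    (h1 : Function.Injective i1) (h2 : Function.Injective i2) (h3 : Function.Injective i3)
    (hd12 : ∀ m n, i1 m ≠ i2 n) (hd13 : ∀ m n, i1 m ≠ i3 n) (hd23 : ∀ m n, i2 m ≠ i3 n) :
    iIndepSet (fun n => F (i1 n) ⁻¹' B (i1 n) ∩
        (F (i2 n) ⁻¹' B (i2 n) ∩ F (i3 n) ⁻¹' B (i3 n))) μ ∧
      ∀ n, μ (F (i1 n) ⁻¹' B (i1 n) ∩ (F (i2 n) ⁻¹' B (i2 n) ∩ F (i3 n) ⁻¹' B (i3 n)))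
        = μ (F (i1 n) ⁻¹' B (i1 n)) * (μ (F (i2 n) ⁻¹' B (i2 n)) * μ (F (i3 n) ⁻¹' B (i3 n))) := by
  have key := hF.measure_inter_preimage_eq_mul
  set A : ℕ → Set Ω' := fun n => F (i1 n) ⁻¹' B (i1 n) ∩
      (F (i2 n) ⁻¹' B (i2 n) ∩ F (i3 n) ⁻¹' B (i3 n)) with hA
  set t : ℕ → Finset ι := fun n => insert (i1 n) (insert (i2 n) {i3 n}) with ht
  have hnm12 : ∀ n, i1 n ∉ insert (i2 n) ({i3 n} : Finset ι) := by
    intro n hmem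
    rcases Finset.mem_insert.1 hmem with h | h
    · exact hd12 n n h
    · exact hd13 n n (Finset.mem_singleton.1 h)
  have hnm23 : ∀ n, i2 n ∉ ({i3 n} : Finset ι) := fun n hmem =>
    hd23 n n (Finset.mem_singleton.1 hmem)
  have hbi : ∀ n, ⋂ i ∈ t n, F i ⁻¹' B i = A n := by
    intro n
    rw [ht]
    simp only
    rw [Finset.set_biInter_insert, Finset.set_biInter_insert, Finset.set_biInter_singleton]
  have hprodn : ∀ n, ∏ i ∈ t n, μ (F i ⁻¹' B i)
      = μ (F (i1 n) ⁻¹' B (i1 n)) * (μ (F (i2 n) ⁻¹' B (i2 n)) * μ (F (i3 n) ⁻¹' B (i3 n))) := by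
    intro n
    rw [ht]
    simp only
    rw [Finset.prod_insert (hnm12 n), Finset.prod_insert (hnm23 n), Finset.prod_singleton]
  have hmeasn : ∀ n, μ (A n)
      = μ (F (i1 n) ⁻¹' B (i1 n)) * (μ (F (i2 n) ⁻¹' B (i2 n)) * μ (F (i3 n) ⁻¹' B (i3 n))) := by
    intro n
    rw [← hbi n, key (t n) (fun i _ => hB i), hprodn n]
  refine ⟨?_, hmeasn⟩
  have hAm : ∀ n, MeasurableSet (A n) := fun n =>
    ((hFm _) (hB _)).inter (((hFm _) (hB _)).inter ((hFm _) (hB _)))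
  rw [iIndepSet_iff_meas_biInter hAm]
  intro s
  have hdisj : (↑s : Set ℕ).PairwiseDisjoint t := by
    intro m _ n _ hmn
    simp only [Function.onFun]
    rw [Finset.disjoint_left]
    intro i him hin
    rw [ht] at him hin
    simp only [Finset.mem_insert, Finset.mem_singleton] at him hin
    rcases him with h | h | h <;> rcases hin with h' | h' | h'
    · exact hmn (h1 (h.symm.trans h'))
    · exact hd12 m n (h.symm.trans h')
    · exact hd13 m n (h.symm.trans h')
    · exact hd12 n m (h'.symm.trans h)
    · exact hmn (h2 (h.symm.trans h'))
    · exact hd23 m n (h.symm.trans h')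
    · exact hd13 n m (h'.symm.trans h)
    · exact hd23 n m (h'.symm.trans h)
    · exact hmn (h3 (h.symm.trans h'))
  calc μ (⋂ n ∈ s, A n) = μ (⋂ i ∈ s.biUnion t, F i ⁻¹' B i) := by
        rw [Finset.set_biInter_biUnion]
        exact congrArg μ (Set.iInter₂_congr fun n (_ : n ∈ s) => (hbi n).symm)
  _ = ∏ i ∈ s.biUnion t, μ (F i ⁻¹' B i) := key _ (fun i _ => hB i)
  _ = ∏ n ∈ s, ∏ i ∈ t n, μ (F i ⁻¹' B i) := Finset.prod_biUnion hdisj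
  _ = ∏ n ∈ s, μ (A n) := Finset.prod_congr rfl fun n _ => by rw [hprodn n, hmeasn n]

lemma tsum_min_top (d : ℕ) (hd : 1 ≤ d) {c L2 αt : ℝ} (hc : 0 < c) (hL2 : 0 < L2)
    (hαt0 : 0 < αt) (hαt1 : αt ≤ 1) :
    ∑' x : {x : Fin d → ℤ // x ≠ 0},
      ENNReal.ofReal (min 1 (c * min L2 ((1 / znorm x.1 ^ d) ^ αt))) = ⊤ := by
  classical
  set g : (Fin d → ℤ) → ℝ := fun x => min 1 (c * min L2 ((1 / znorm x ^ d) ^ αt)) with hg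
  set i0 : Fin d := ⟨0, hd⟩ with hi0
  have hsd : (0:ℝ) < Real.sqrt d :=
    Real.sqrt_pos.2 (by exact_mod_cast Nat.pos_of_ne_zero (by omega))
  set c₃ : ℝ := 1 / (Real.sqrt d * 2) ^ d with hc₃
  have hc₃0 : 0 < c₃ := by rw [hc₃]; positivity
  set δ : ℝ := min 1 (c * min L2 c₃) with hδ
  have hδ0 : 0 < δ := lt_min one_pos (mul_pos hc (lt_min hL2 hc₃0))
  have h2pow : ∀ m : ℕ, (1:ℝ) ≤ 2 ^ m := fun m => by
    calc (1:ℝ) = 1^m := (one_pow m).symm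
    _ ≤ 2^m := pow_le_pow_left₀ one_pos.le one_le_two m
  -- shells
  have hemb : ∀ k : ℕ, ∃ Sh : Finset {x : Fin d → ℤ // x ≠ 0},
      (2^(k*d) : ℕ) ≤ Sh.card ∧ (∀ x ∈ Sh, δ / 2^(k*d) ≤ g x.1) ∧
      (∀ x ∈ Sh, (2^k : ℤ) ≤ x.1 i0 ∧ x.1 i0 < 2^(k+1)) := by
    intro k
    set Φ : (Fin d → Fin (2^k)) → (Fin d → ℤ) :=
      fun y i => ((y i : ℕ) : ℤ) + if i = i0 then 2^k else 0 with hΦ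
    have h2k : (0:ℤ) < 2^k := by positivity
    have hΦi0 : ∀ y, (2^k : ℤ) ≤ Φ y i0 ∧ Φ y i0 < 2^(k+1) := by
      intro y
      constructor
      · simp only [hΦ, if_pos rfl]
        exact le_add_of_nonneg_left (Int.ofNat_nonneg _)
      · simp only [hΦ, if_pos rfl]
        have hy' : (y i0 : ℕ) + 2^k < 2^(k+1) := by
          have := (y i0).isLt
          omega
        exact_mod_cast hy' 
    have hΦne : ∀ y, Φ y ≠ 0 := by
      intro y h
      have h0 := congrFun h i0
      have h1 := (hΦi0 y).1
      rw [h0] at h1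
      simp only [Pi.zero_apply] at h1
      linarith
    have hΦinj : Function.Injective Φ := by
      intro a b hab
      funext i
      have := congrFun hab i
      simp only [hΦ, add_left_inj] at this
      have : (a i : ℕ) = (b i : ℕ) := by exact_mod_cast this
      exact Fin.ext this
    have habs : ∀ y i, |((Φ y i : ℤ) : ℝ)| ≤ (2:ℝ)^(k+1) := by
      intro y i
      have hb : (0:ℤ) ≤ Φ y i ∧ Φ y i < 2^(k+1) := by
        constructor
        · simp only [hΦ]
          split
          · exact add_nonneg (Int.ofNat_nonneg _) (by positivity)
          · simpa using Int.ofNat_nonneg (y i : ℕ)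
        · simp only [hΦ]
          split
          · have hy' : (y i : ℕ) + 2^k < 2^(k+1) := by
              have := (y i).isLt
              omega
            exact_mod_cast hy'
          · rw [add_zero]
            have hy' : (y i : ℕ) < 2^(k+1) := by
              have := (y i).isLt
              have h2 : (2:ℕ)^k ≤ 2^(k+1) := Nat.pow_le_pow_right (by norm_num) (by omega)
              omega
            exact_mod_cast hy' 
      rw [abs_of_nonneg (by exact_mod_cast hb.1)]
      have : Φ y i ≤ 2^(k+1) := hb.2.le
      exact_mod_cast this
    have hz_le : ∀ y, znorm (Φ y) ≤ Real.sqrt d * 2^(k+1) :=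
      fun y => znorm_le_of_abs_le (by positivity) (habs y)
    have hg_ge : ∀ y, δ / 2^(k*d) ≤ g (Φ y) := by
      intro y
      have hz1 : (1:ℝ) ≤ znorm (Φ y) := one_le_znorm (hΦne y)
      set z : ℝ := znorm (Φ y) with hz
      have hz0 : (0:ℝ) < z := lt_of_lt_of_le one_pos hz1
      have hzd1 : (1:ℝ) ≤ z ^ d := by
        calc (1:ℝ) = 1^d := (one_pow d).symm
        _ ≤ z^d := pow_le_pow_left₀ one_pos.le hz1 d
      have hb0 : (0:ℝ) < 1 / z^d := by positivity
      have hb1 : 1 / z^d ≤ 1 := by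
        rw [div_le_one (by positivity)]
        exact hzd1
      have hρ1 : 1 / z^d ≤ (1 / z^d) ^ αt := by
        have := Real.rpow_le_rpow_of_exponent_ge hb0 hb1 hαt1
        rwa [Real.rpow_one] at this
      have hMk : (Real.sqrt d * 2^(k+1))^d = (Real.sqrt d * 2)^d * 2^(k*d) := by
        have h1 : Real.sqrt d * 2^(k+1) = (Real.sqrt d * 2) * 2^k := by
          rw [pow_succ]; ring
        rw [h1, mul_pow, ← pow_mul]
      have hinv : c₃ / 2^(k*d) ≤ 1 / z^d := by
        rw [hc₃, div_div, ← hMk]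
        apply one_div_le_one_div_of_le (by positivity)
        exact pow_le_pow_left₀ (znorm_nonneg _) (hz_le y) d
      refine le_min ?_ ?_
      · calc δ / 2^(k*d) ≤ δ := div_le_self hδ0.le (h2pow _)
        _ ≤ 1 := min_le_left _ _
      · have hδle : δ ≤ c * min L2 c₃ := min_le_right _ _
        calc δ / 2^(k*d) ≤ (c * min L2 c₃) / 2^(k*d) := by gcongr
        _ = c * (min L2 c₃ / 2^(k*d)) := by ring
        _ ≤ c * min L2 ((1 / z^d) ^ αt) := by
            apply mul_le_mul_of_nonneg_left ?_ hc.le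
            refine le_min ?_ ?_
            · calc min L2 c₃ / 2^(k*d) ≤ min L2 c₃ := div_le_self (le_min hL2.le hc₃0.le) (h2pow _)
              _ ≤ L2 := min_le_left _ _
            · calc min L2 c₃ / 2^(k*d) ≤ c₃ / 2^(k*d) := by gcongr; exact min_le_right _ _
              _ ≤ 1 / z^d := hinv
              _ ≤ (1 / z^d) ^ αt := hρ1
    refine ⟨Finset.image (fun y => (⟨Φ y, hΦne y⟩ : {x : Fin d → ℤ // x ≠ 0})) Finset.univ,
      ?_, ?_, ?_⟩
    · rw [Finset.card_image_of_injective _ (fun a b hab => hΦinj (congrArg Subtype.val hab))]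
      rw [Finset.card_univ]
      simp only [Fintype.card_fun, Fintype.card_fin]
      rw [← pow_mul]
    · intro x hx
      obtain ⟨y, -, rfl⟩ := Finset.mem_image.1 hx
      exact hg_ge y
    · intro x hx
      obtain ⟨y, -, rfl⟩ := Finset.mem_image.1 hx
      exact hΦi0 y
  choose Sh hcard hglow hrange using hemb
  by_contra hne
  obtain ⟨K, hK⟩ := ENNReal.exists_nat_mul_gt (a := ENNReal.ofReal δ)
    (ENNReal.ofReal_pos.2 hδ0).ne' hne
  have hdisj : (↑(Finset.range K) : Set ℕ).PairwiseDisjoint Sh := by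
    intro a _ b _ hab
    simp only [Function.onFun]
    rw [Finset.disjoint_left]
    intro x hxa hxb
    obtain ⟨h1, h2⟩ := hrange a x hxa
    obtain ⟨h3, h4⟩ := hrange b x hxb
    rcases Nat.lt_or_ge a b with h | h
    · have hp : (2:ℤ)^(a+1) ≤ 2^b := pow_le_pow_right₀ one_le_two h
      linarith
    · have hba : b < a := lt_of_le_of_ne h (Ne.symm hab)
      have hp : (2:ℤ)^(b+1) ≤ 2^a := pow_le_pow_right₀ one_le_two hba
      linarith
  have hshell : ∀ k, ENNReal.ofReal δ ≤ ∑ x ∈ Sh k, ENNReal.ofReal (g x.1) := by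
    intro k
    have hstep : ∀ x ∈ Sh k, ENNReal.ofReal (δ/2^(k*d)) ≤ ENNReal.ofReal (g x.1) :=
      fun x hx => ENNReal.ofReal_le_ofReal (hglow k x hx)
    have h1 : ENNReal.ofReal δ = (2^(k*d) : ℕ) • ENNReal.ofReal (δ/2^(k*d)) := by
      rw [nsmul_eq_mul, ← ENNReal.ofReal_natCast (2^(k*d)),
        ← ENNReal.ofReal_mul (by positivity)]
      congr 1
      push_cast
      field_simp
    calc ENNReal.ofReal δ = (2^(k*d) : ℕ) • ENNReal.ofReal (δ/2^(k*d)) := h1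
    _ ≤ (Sh k).card • ENNReal.ofReal (δ/2^(k*d)) := by
        rw [nsmul_eq_mul, nsmul_eq_mul]
        exact mul_le_mul_left (Nat.cast_le.2 (hcard k)) _
    _ ≤ ∑ x ∈ Sh k, ENNReal.ofReal (g x.1) := Finset.card_nsmul_le_sum _ _ _ hstep
  have hle : (K : ℝ≥0∞) * ENNReal.ofReal δ ≤
      ∑' x : {x : Fin d → ℤ // x ≠ 0}, ENNReal.ofReal (g x.1) := by
    calc (K : ℝ≥0∞) * ENNReal.ofReal δ = ∑ _k ∈ Finset.range K, ENNReal.ofReal δ := by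
          rw [Finset.sum_const, Finset.card_range, nsmul_eq_mul]
    _ ≤ ∑ k ∈ Finset.range K, ∑ x ∈ Sh k, ENNReal.ofReal (g x.1) :=
          Finset.sum_le_sum fun k _ => hshell k
    _ = ∑ x ∈ (Finset.range K).biUnion Sh, ENNReal.ofReal (g x.1) :=
          (Finset.sum_biUnion hdisj).symm
    _ ≤ _ := ENNReal.sum_le_tsum _
  exact absurd hK (not_lt.2 hle)

end SFPAux

end Aux

/-- For SFP on `ℤ^d` with power-law weights of exponent `τ ∈ (1,3)`,
long-range parameter `α ∈ (0,1]`, and product penalty `f(w₁,w₂) = (w₁w₂)^μ` with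
`μ > 0`: explosion occurs almost surely, and it is sideways explosion — there exists
`T < ∞` such that with positive probability the origin is incident to infinitely many
edges of cost at most `T`. -/
theorem sfp_product_penalty_sideways_explosive
    {d : ℕ} (hd : 1 ≤ d) {Ω : Type*} [MeasurableSpace Ω] (M : SFP.Data d Ω)
    (hM : M.Valid) (τ : ℝ) (hτ : τ ∈ Set.Ioo (1 : ℝ) 3)
    (hW : SFP.PowerLawTails M.P M.W τ)
    (α : ℝ≥0∞) (hα0 : 0 < α) (hα1 : α ≤ 1) (hEB : SFP.EdgeBounds M.h α)
    (μ : ℝ) (hμ : 0 < μ) :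
    M.P {ω | M.explosionTime (fun w₁ w₂ => (w₁ * w₂) ^ μ) ω 0 < ⊤} = 1 ∧
      ∃ T : ℝ,
        0 < M.P {ω | (M.cheapNbrs (fun w₁ w₂ => (w₁ * w₂) ^ μ) ω 0 T).Infinite} := by
  classical
  obtain ⟨hP, hWm, hLm, hW1, hL0, hh01, hfamm, hWt1, hLen0, hWtd, hUd, hLend, hindep⟩ := hM
  haveI := hP
  obtain ⟨γ, cl, cu, cl1, cu1, c₂, hγ, hcl, hcu, hcl1, hcu1, hc2, hbound⟩ := hEB
  have hlow : ∀ x : Fin d → ℝ, x ≠ 0 → ∀ w₁ w₂ : ℝ, 1 ≤ w₁ → 1 ≤ w₂ →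
      cl * min (SFP.lfun c₂ γ w₁ * SFP.lfun c₂ γ w₂)
        ((w₁ * w₂ / SFP.rnorm x ^ d) ^ α.toReal) ≤ M.h x w₁ w₂ := by
    rcases hbound with ⟨-, hb⟩ | ⟨htop, -⟩
    · intro x hx w₁ w₂ h1 h2
      exact (hb x hx w₁ w₂ h1 h2).1
    · rw [htop] at hα1
      exact absurd hα1 (by simp)
  set αt := α.toReal with hαt
  have hαtop : α ≠ ⊤ := ne_top_of_le_ne_top ENNReal.one_ne_top hα1
  have hαt0 : 0 < αt := ENNReal.toReal_pos hα0.ne' hαtop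
  have hαt1 : αt ≤ 1 := by
    have h := ENNReal.toReal_mono ENNReal.one_ne_top hα1
    simpa using h
  obtain ⟨w₀, hw₀1, hw₀⟩ := SFPAux.exists_level M.P M.W 1
  obtain ⟨t₀, ht₀0, ht₀⟩ := SFPAux.exists_level M.P M.L 0
  set ℓ₀ : ℝ := SFP.lfun c₂ γ w₀ with hℓ₀def
  have hℓ₀ : 0 < ℓ₀ := Real.exp_pos _
  have hL2 : 0 < ℓ₀ * ℓ₀ := mul_pos hℓ₀ hℓ₀
  set q : (Fin d → ℤ) → ℝ :=
    fun x => min 1 (cl * min (ℓ₀ * ℓ₀) ((1 / SFP.znorm x ^ d) ^ αt)) with hqdef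
  have hq0 : ∀ x, 0 ≤ q x := by
    intro x
    have h1 : (0:ℝ) ≤ (1 / SFP.znorm x ^ d) ^ αt :=
      Real.rpow_nonneg (div_nonneg zero_le_one (pow_nonneg (SFPAux.znorm_nonneg x) d)) _
    exact le_min zero_le_one (mul_nonneg hcl.le (le_min hL2.le h1))
  have hq1 : ∀ x, q x ≤ 1 := fun x => min_le_left _ _
  have hqsub : ∀ x : Fin d → ℤ, q (0 - x) = q x := by
    intro x
    simp only [hqdef, SFPAux.znorm_zero_sub]
  have hqcomm : ∀ u v : Fin d → ℤ, q (u - v) = q (v - u) := by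
    intro u v
    simp only [hqdef, SFPAux.znorm_sub_comm u v]
  set pe : Sym2 (Fin d → ℤ) → ℝ := Sym2.lift ⟨fun u v => q (u - v), hqcomm⟩ with hpedef
  have hpe : ∀ u v : Fin d → ℤ, pe s(u, v) = q (u - v) := by
    intro u v
    rw [hpedef, Sym2.lift_mk]
  set B : SFP.Idx d → Set ℝ := fun i =>
    match i with
    | SFP.Idx.wt _ => Set.Iic w₀
    | SFP.Idx.unif ed => Set.Iic (pe ed)
    | SFP.Idx.len _ => Set.Iic t₀ with hBdef
  have hBm : ∀ i, MeasurableSet (B i) := by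
    intro i
    cases i <;> exact measurableSet_Iic
  haveI hFinN : Nonempty (Fin d) := ⟨⟨0, hd⟩⟩
  haveI : Infinite {x : Fin d → ℤ // x ≠ 0} := by
    refine Infinite.of_injective
      (fun n : ℕ => (⟨fun _ => (n:ℤ) + 1, fun h => ?_⟩ : {x : Fin d → ℤ // x ≠ 0})) ?_
    · have h0 := congrFun h ⟨0, hd⟩
      simp only [Pi.zero_apply] at h0
      omega
    · intro m n hmn
      have h1 := congrArg Subtype.val hmn
      have h2 := congrFun h1 ⟨0, hd⟩
      simp only at h2
      have : (m:ℤ) = n := by omega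
      exact_mod_cast this
  haveI : Encodable {x : Fin d → ℤ // x ≠ 0} := Encodable.ofCountable _
  haveI : Denumerable {x : Fin d → ℤ // x ≠ 0} := Denumerable.ofEncodableOfInfinite _
  set ν : ℕ ≃ {x : Fin d → ℤ // x ≠ 0} :=
    (Denumerable.eqv {x : Fin d → ℤ // x ≠ 0}).symm with hν
  set X : ℕ → Fin d → ℤ := fun n => (ν n).1 with hX
  have hXne : ∀ n, X n ≠ 0 := fun n => (ν n).2
  have hXinj : Function.Injective X := fun m n h => ν.injective (Subtype.ext h)
  set i1 : ℕ → SFP.Idx d := fun n => SFP.Idx.wt (X n) with hi1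
  set i2 : ℕ → SFP.Idx d := fun n => SFP.Idx.unif s(0, X n) with hi2
  set i3 : ℕ → SFP.Idx d := fun n => SFP.Idx.len s(0, X n) with hi3
  have hs2inj : ∀ m n : ℕ, (s(0, X m) : Sym2 (Fin d → ℤ)) = s(0, X n) → m = n := by
    intro m n h
    rw [Sym2.eq_iff] at h
    rcases h with ⟨-, h⟩ | ⟨h1, -⟩
    · exact hXinj h
    · exact absurd h1.symm (hXne n)
  have h1inj : Function.Injective i1 := by
    intro m n h
    simp only [hi1, SFP.Idx.wt.injEq] at h
    exact hXinj h
  have h2inj : Function.Injective i2 := by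
    intro m n h
    simp only [hi2, SFP.Idx.unif.injEq] at h
    exact hs2inj m n h
  have h3inj : Function.Injective i3 := by
    intro m n h
    simp only [hi3, SFP.Idx.len.injEq] at h
    exact hs2inj m n h
  have hd12 : ∀ m n, i1 m ≠ i2 n := fun m n h => by simp only [hi1, hi2] at h; cases h
  have hd13 : ∀ m n, i1 m ≠ i3 n := fun m n h => by simp only [hi1, hi3] at h; cases h
  have hd23 : ∀ m n, i2 m ≠ i3 n := fun m n h => by simp only [hi2, hi3] at h; cases h
  obtain ⟨hAindep, hAval⟩ :=
    SFPAux.indep_triples hindep hfamm hBm h1inj h2inj h3inj hd12 hd13 hd23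
  set A : ℕ → Set Ω := fun n => M.family (i1 n) ⁻¹' B (i1 n) ∩
      (M.family (i2 n) ⁻¹' B (i2 n) ∩ M.family (i3 n) ⁻¹' B (i3 n)) with hAdef
  set κa : ℝ≥0∞ := M.P {ω | M.W ω ≤ w₀} with hκa
  set κb : ℝ≥0∞ := M.P {ω | M.L ω ≤ t₀} with hκb
  have hfa : ∀ v : Fin d → ℤ, M.P (M.Wt v ⁻¹' Set.Iic w₀) = κa := by
    intro v
    have hmv : Measurable (M.Wt v) := hfamm (SFP.Idx.wt v)
    rw [← Measure.map_apply hmv measurableSet_Iic, hWtd v,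
      Measure.map_apply hWm measurableSet_Iic]
    rfl
  have hfb : ∀ x : Fin d → ℤ, x ≠ 0 → M.P (M.Len s(0,x) ⁻¹' Set.Iic t₀) = κb := by
    intro x hx
    have hnd : ¬ (s((0 : Fin d → ℤ), x)).IsDiag := by
      rw [Sym2.mk_isDiag_iff]
      exact fun h => hx h.symm
    have hmv : Measurable (M.Len s(0,x)) := hfamm (SFP.Idx.len s(0,x))
    rw [← Measure.map_apply hmv measurableSet_Iic, hLend _ hnd,
      Measure.map_apply hLm measurableSet_Iic]
    rfl
  have hfu : ∀ x : Fin d → ℤ, x ≠ 0 →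
      M.P (M.U s(0,x) ⁻¹' Set.Iic (pe s(0,x))) = ENNReal.ofReal (q x) := by
    intro x hx
    have hnd : ¬ (s((0 : Fin d → ℤ), x)).IsDiag := by
      rw [Sym2.mk_isDiag_iff]
      exact fun h => hx h.symm
    have hmv : Measurable (M.U s(0,x)) := hfamm (SFP.Idx.unif s(0,x))
    rw [← Measure.map_apply hmv measurableSet_Iic, hUd _ hnd,
      Measure.restrict_apply measurableSet_Iic]
    have hpex : pe s(0, x) = q x := by rw [hpe 0 x, hqsub]
    rw [hpex]
    have hIcc : Set.Iic (q x) ∩ Set.Icc 0 1 = Set.Icc 0 (q x) := by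
      ext z
      simp only [Set.mem_inter_iff, Set.mem_Iic, Set.mem_Icc]
      constructor
      · rintro ⟨ha, hb, -⟩
        exact ⟨hb, ha⟩
      · rintro ⟨ha, hb⟩
        exact ⟨hb, ha, le_trans hb (hq1 x)⟩
    rw [hIcc, Real.volume_Icc, sub_zero]
  have hAval' : ∀ n, M.P (A n) = κa * (ENNReal.ofReal (q (X n)) * κb) := by
    intro n
    have e1 : M.family (i1 n) ⁻¹' B (i1 n) = M.Wt (X n) ⁻¹' Set.Iic w₀ := rfl
    have e2 : M.family (i2 n) ⁻¹' B (i2 n)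
        = M.U s(0, X n) ⁻¹' Set.Iic (pe s(0, X n)) := rfl
    have e3 : M.family (i3 n) ⁻¹' B (i3 n) = M.Len s(0, X n) ⁻¹' Set.Iic t₀ := rfl
    calc M.P (A n) = M.P (M.family (i1 n) ⁻¹' B (i1 n))
        * (M.P (M.family (i2 n) ⁻¹' B (i2 n)) * M.P (M.family (i3 n) ⁻¹' B (i3 n))) :=
          hAval n
    _ = κa * (ENNReal.ofReal (q (X n)) * κb) := by
        rw [e1, e2, e3, hfa (X n), hfu (X n) (hXne n), hfb (X n) (hXne n)]

  have htsum : ∑' n, M.P (A n) = ⊤ := by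
    have hrw : ∀ n : ℕ, M.P (A n) = κa * κb * ENNReal.ofReal (q (X n)) := by
      intro n
      rw [hAval' n]
      ring
    rw [tsum_congr hrw, ENNReal.tsum_mul_left]
    have hsq : ∑' n : ℕ, ENNReal.ofReal (q (X n))
        = ∑' x : {x : Fin d → ℤ // x ≠ 0}, ENNReal.ofReal (q x.1) :=
      ν.tsum_eq (fun x => ENNReal.ofReal (q x.1))
    rw [hsq]
    have hdiv : ∑' x : {x : Fin d → ℤ // x ≠ 0}, ENNReal.ofReal (q x.1) = ⊤ :=
      SFPAux.tsum_min_top d hd hcl hL2 hαt0 hαt1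
    rw [hdiv, ENNReal.mul_top (mul_ne_zero hw₀.ne' ht₀.ne')]
  have hAm : ∀ n, MeasurableSet (A n) := fun n =>
    ((hfamm (i1 n)) (hBm (i1 n))).inter
      (((hfamm (i2 n)) (hBm (i2 n))).inter ((hfamm (i3 n)) (hBm (i3 n))))
  have hlim : M.P (Filter.limsup A Filter.atTop) = 1 :=
    ProbabilityTheory.measure_limsup_eq_one hAm hAindep htsum
  have hAn_spec : ∀ n ω, ω ∈ A n →
      M.Wt (X n) ω ≤ w₀ ∧ M.U s(0, X n) ω ≤ q (X n) ∧ M.Len s(0, X n) ω ≤ t₀ := by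
    intro n ω hω
    obtain ⟨ha, hb, hc⟩ := hω
    refine ⟨ha, ?_, hc⟩
    have hb' : M.U s(0, X n) ω ≤ pe s(0, X n) := hb
    rwa [hpe, hqsub] at hb'
  have hzx : ∀ n : ℕ, (1:ℝ) ≤ SFP.znorm (0 - X n) := by
    intro n
    apply SFPAux.one_le_znorm
    intro h
    apply hXne n
    funext i
    have h0 := congrFun h i
    simp only [Pi.sub_apply, Pi.zero_apply] at h0 ⊢
    omega
  have hAdj : ∀ (ω : Ω) (n : ℕ), ω ∈ A n →
      (M.Wt 0 ω ≤ w₀ ∨ (1 / SFP.znorm (X n) ^ d) ^ αt ≤ SFP.lfun c₂ γ (M.Wt 0 ω) * ℓ₀) →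
      M.Adj ω 0 (X n) ∧ M.cost (fun w₁ w₂ => (w₁ * w₂) ^ μ) ω 0 (X n)
        ≤ t₀ * (M.Wt 0 ω * w₀) ^ μ := by
    intro ω n hωA hcase
    obtain ⟨hwa, hub, hlb⟩ := hAn_spec n ω hωA
    have hw0 : (1:ℝ) ≤ M.Wt 0 ω := hWt1 0 ω
    have hwx : (1:ℝ) ≤ M.Wt (X n) ω := hWt1 (X n) ω
    have hcost : M.cost (fun w₁ w₂ => (w₁ * w₂) ^ μ) ω 0 (X n)
        ≤ t₀ * (M.Wt 0 ω * w₀) ^ μ := by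
      show M.Len s(0, X n) ω * (M.Wt 0 ω * M.Wt (X n) ω) ^ μ ≤ t₀ * (M.Wt 0 ω * w₀) ^ μ
      apply mul_le_mul hlb ?_ ?_ ht₀0
      · apply Real.rpow_le_rpow (mul_nonneg (by linarith) (by linarith)) ?_ hμ.le
        exact mul_le_mul_of_nonneg_left hwa (by linarith)
      · exact Real.rpow_nonneg (mul_nonneg (by linarith) (by linarith)) μ
    refine ⟨?_, hcost⟩
    rcases eq_or_lt_of_le (hzx n) with heq | hlt
    · exact Or.inl heq.symm
    · refine Or.inr ⟨hlt, ?_⟩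
      set xr : Fin d → ℝ := fun i => (((0 : Fin d → ℤ) - X n) i : ℝ) with hxr
      have hrn : SFP.rnorm xr = SFP.znorm (X n) := SFPAux.znorm_zero_sub (X n)
      have hz1 : (1:ℝ) ≤ SFP.znorm (X n) := SFPAux.one_le_znorm (hXne n)
      have hxrne : xr ≠ 0 := by
        intro h
        have h1 : SFP.rnorm xr = 0 := by
          rw [h]
          simp [SFP.rnorm]
        rw [hrn] at h1
        linarith
      have hbd := hlow xr hxrne (M.Wt 0 ω) (M.Wt (X n) ω) hw0 hwx
      apply le_trans hub
      apply le_trans ?_ hbd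
      rw [hrn]
      have hz0 : (0:ℝ) < SFP.znorm (X n) := lt_of_lt_of_le one_pos hz1
      have hzd : (0:ℝ) < SFP.znorm (X n) ^ d := pow_pos hz0 d
      have hnum : (1:ℝ) ≤ M.Wt 0 ω * M.Wt (X n) ω := by nlinarith
      have hρρ' : (1 / SFP.znorm (X n) ^ d) ^ αt
          ≤ ((M.Wt 0 ω * M.Wt (X n) ω) / SFP.znorm (X n) ^ d) ^ αt := by
        apply Real.rpow_le_rpow (div_nonneg zero_le_one hzd.le) ?_ hαt0.le
        exact (div_le_div_iff_of_pos_right hzd).2 hnum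
      have hlx : ℓ₀ ≤ SFP.lfun c₂ γ (M.Wt (X n) ω) := by
        rw [hℓ₀def]
        exact SFPAux.lfun_antitone hc2.le hγ.1.le hwx hwa
      have hmin : min (ℓ₀ * ℓ₀) ((1 / SFP.znorm (X n) ^ d) ^ αt)
          ≤ min (SFP.lfun c₂ γ (M.Wt 0 ω) * SFP.lfun c₂ γ (M.Wt (X n) ω))
            ((M.Wt 0 ω * M.Wt (X n) ω / SFP.znorm (X n) ^ d) ^ αt) := by
        refine le_min ?_ (le_trans (min_le_right _ _) hρρ')
        rcases hcase with hW0le | hρcase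
        · have hl0 : ℓ₀ ≤ SFP.lfun c₂ γ (M.Wt 0 ω) := by
            rw [hℓ₀def]
            exact SFPAux.lfun_antitone hc2.le hγ.1.le hw0 hW0le
          calc min (ℓ₀ * ℓ₀) ((1 / SFP.znorm (X n) ^ d) ^ αt) ≤ ℓ₀ * ℓ₀ := min_le_left _ _
          _ ≤ SFP.lfun c₂ γ (M.Wt 0 ω) * SFP.lfun c₂ γ (M.Wt (X n) ω) :=
              mul_le_mul hl0 hlx hℓ₀.le (le_trans hℓ₀.le hl0)
        · calc min (ℓ₀ * ℓ₀) ((1 / SFP.znorm (X n) ^ d) ^ αt)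
              ≤ (1 / SFP.znorm (X n) ^ d) ^ αt := min_le_right _ _
          _ ≤ SFP.lfun c₂ γ (M.Wt 0 ω) * ℓ₀ := hρcase
          _ ≤ SFP.lfun c₂ γ (M.Wt 0 ω) * SFP.lfun c₂ γ (M.Wt (X n) ω) :=
              mul_le_mul_of_nonneg_left hlx (SFPAux.lfun_pos c₂ γ _).le
      calc q (X n) ≤ cl * min (ℓ₀ * ℓ₀) ((1 / SFP.znorm (X n) ^ d) ^ αt) := min_le_right _ _
      _ ≤ cl * min (SFP.lfun c₂ γ (M.Wt 0 ω) * SFP.lfun c₂ γ (M.Wt (X n) ω))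
          ((M.Wt 0 ω * M.Wt (X n) ω / SFP.znorm (X n) ^ d) ^ αt) :=
          mul_le_mul_of_nonneg_left hmin hcl.le
  have hInf : ∀ ω, ω ∈ Filter.limsup A Filter.atTop → ∀ r : ℝ, 0 < r →
      {n : ℕ | ω ∈ A n ∧ (1 / SFP.znorm (X n) ^ d) ^ αt ≤ r}.Infinite := by
    intro ω hω r hr
    have h1 : {n : ℕ | ω ∈ A n}.Infinite :=
      Nat.frequently_atTop_iff_infinite.1 (Filter.mem_limsup_iff_frequently_mem.1 hω)
    set R : ℝ := 1 / r ^ (1/αt) with hR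
    have h2 : {n : ℕ | ¬ (1 / SFP.znorm (X n) ^ d) ^ αt ≤ r}.Finite := by
      have hsub : {n : ℕ | ¬ (1 / SFP.znorm (X n) ^ d) ^ αt ≤ r}
          ⊆ X ⁻¹' {x : Fin d → ℤ | SFP.znorm x ≤ R} := by
        intro n hn
        simp only [Set.mem_setOf_eq, not_le] at hn
        have hz1 : (1:ℝ) ≤ SFP.znorm (X n) := SFPAux.one_le_znorm (hXne n)
        have hz0 : (0:ℝ) < SFP.znorm (X n) := lt_of_lt_of_le one_pos hz1
        have hzd : (0:ℝ) < SFP.znorm (X n) ^ d := pow_pos hz0 d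
        have hstep : r ^ (1/αt) < 1 / SFP.znorm (X n) ^ d := by
          have h3 := Real.rpow_lt_rpow hr.le hn (by positivity : (0:ℝ) < 1/αt)
          rwa [← Real.rpow_mul (div_nonneg zero_le_one hzd.le),
            mul_one_div_cancel hαt0.ne', Real.rpow_one] at h3
        have h4 : r ^ (1/αt) * SFP.znorm (X n) ^ d < 1 := (lt_div_iff₀ hzd).1 hstep
        have h5 : (0:ℝ) < r ^ (1/αt) := Real.rpow_pos_of_pos hr _
        have hzz : SFP.znorm (X n) ≤ SFP.znorm (X n) ^ d := le_self_pow₀ hz1 (by omega)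
        have hlt : SFP.znorm (X n) ^ d < R := by
          rw [hR, lt_div_iff₀ h5]
          nlinarith
        exact le_of_lt (lt_of_le_of_lt hzz hlt)
      exact ((SFPAux.finite_ball R).preimage hXinj.injOn).subset hsub
    have hss : {n : ℕ | ω ∈ A n} \ {n : ℕ | ¬ (1 / SFP.znorm (X n) ^ d) ^ αt ≤ r}
        ⊆ {n : ℕ | ω ∈ A n ∧ (1 / SFP.znorm (X n) ^ d) ^ αt ≤ r} := by
      intro n hn
      exact ⟨hn.1, not_not.1 hn.2⟩
    exact Set.Infinite.mono hss (h1.diff h2)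
  have hsingle : ∀ (ω : Ω) (x : Fin d → ℤ), x ≠ 0 → M.Adj ω 0 x →
      M.costDist (fun w₁ w₂ => (w₁ * w₂) ^ μ) ω 0 x
        ≤ ENNReal.ofReal (M.cost (fun w₁ w₂ => (w₁ * w₂) ^ μ) ω 0 x) := by
    intro ω x hx hadj
    set π : ℕ → Fin d → ℤ := fun i => if i = 0 then 0 else x with hπ
    have hπ0 : π 0 = 0 := by simp [hπ]
    have hπ1 : π 1 = x := by simp [hπ]
    have hps : M.IsPathSeg ω 1 π := by
      constructor
      · intro i hi
        have hi0 : i = 0 := by omega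
        subst hi0
        show M.Adj ω (π 0) (π 1)
        rw [hπ0, hπ1]
        exact hadj
      · intro i j hi hj hij
        interval_cases i <;> interval_cases j
        · rfl
        · rw [hπ0, hπ1] at hij
          exact absurd hij.symm hx
        · rw [hπ0, hπ1] at hij
          exact absurd hij hx
        · rfl
    have hcd : M.costDist (fun w₁ w₂ => (w₁ * w₂) ^ μ) ω 0 x
        ≤ M.pathCost (fun w₁ w₂ => (w₁ * w₂) ^ μ) ω 1 π := by
      rw [SFP.Data.costDist]
      refine iInf_le_of_le 1 ?_
      refine iInf_le_of_le π ?_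
      refine iInf_le_of_le hπ0 ?_
      refine iInf_le_of_le hπ1 ?_
      exact iInf_le _ hps
    refine le_trans hcd (le_of_eq ?_)
    rw [SFP.Data.pathCost, Finset.sum_range_one]
    have e01 : π (0+1) = x := hπ1
    rw [hπ0, e01]
  refine ⟨?_, ?_⟩
  · have hpart1 : Filter.limsup A Filter.atTop ⊆
        {ω | M.explosionTime (fun w₁ w₂ => (w₁ * w₂) ^ μ) ω 0 < ⊤} := by
      intro ω hω
      have hr : (0:ℝ) < SFP.lfun c₂ γ (M.Wt 0 ω) * ℓ₀ :=
        mul_pos (SFPAux.lfun_pos c₂ γ _) hℓ₀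
      have hN := hInf ω hω _ hr
      have hcd : ∀ n, n ∈ {n : ℕ | ω ∈ A n ∧ (1 / SFP.znorm (X n) ^ d) ^ αt
          ≤ SFP.lfun c₂ γ (M.Wt 0 ω) * ℓ₀} →
          M.costDist (fun w₁ w₂ => (w₁ * w₂) ^ μ) ω 0 (X n)
            ≤ ENNReal.ofReal (t₀ * (M.Wt 0 ω * w₀) ^ μ) := by
        intro n hn
        obtain ⟨hadj, hcost⟩ := hAdj ω n hn.1 (Or.inr hn.2)
        exact le_trans (hsingle ω (X n) (hXne n) hadj) (ENNReal.ofReal_le_ofReal hcost)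
      have hbound : M.explosionTime (fun w₁ w₂ => (w₁ * w₂) ^ μ) ω 0
          ≤ ENNReal.ofReal (t₀ * (M.Wt 0 ω * w₀) ^ μ) := by
        rw [SFP.Data.explosionTime]
        apply iSup_le
        intro k
        apply sInf_le
        obtain ⟨t, hts, htc⟩ := hN.exists_subset_card_eq (k+1)
        refine ⟨Finset.image X t, ?_, ?_⟩
        · rw [Finset.card_image_of_injective _ hXinj, htc]
          omega
        · intro u hu
          obtain ⟨n, hnt, rfl⟩ := Finset.mem_image.1 hu
          exact hcd n (hts hnt)
      exact lt_of_le_of_lt hbound ENNReal.ofReal_lt_top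
    refine le_antisymm prob_le_one ?_
    calc (1:ℝ≥0∞) = M.P (Filter.limsup A Filter.atTop) := hlim.symm
    _ ≤ M.P {ω | M.explosionTime (fun w₁ w₂ => (w₁ * w₂) ^ μ) ω 0 < ⊤} :=
        measure_mono hpart1
  · refine ⟨t₀ * (w₀ * w₀) ^ μ, ?_⟩
    have hEm : MeasurableSet (Filter.limsup A Filter.atTop) := MeasurableSet.measurableSet_limsup hAm
    have hEc : M.P (Filter.limsup A Filter.atTop)ᶜ = 0 := by
      rw [measure_compl hEm (measure_ne_top _ _), hlim]
      simp
    set Bev : Set Ω := M.Wt 0 ⁻¹' Set.Iic w₀ with hBevdef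
    have hBE : M.P (Bev ∩ Filter.limsup A Filter.atTop) = M.P Bev := by
      have h1 := measure_inter_add_diff (μ := M.P) Bev hEm
      have h2 : M.P (Bev \ Filter.limsup A Filter.atTop) = 0 :=
        measure_mono_null (fun ω' hω' => hω'.2) hEc
      rw [h2, add_zero] at h1
      exact h1
    have hsub2 : Bev ∩ Filter.limsup A Filter.atTop ⊆
        {ω | (M.cheapNbrs (fun w₁ w₂ => (w₁ * w₂) ^ μ) ω 0 (t₀ * (w₀ * w₀) ^ μ)).Infinite} := by
      rintro ω ⟨hW0, hω⟩
      have hW0' : M.Wt 0 ω ≤ w₀ := hW0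
      have hmem : {n : ℕ | ω ∈ A n}.Infinite :=
        Nat.frequently_atTop_iff_infinite.1 (Filter.mem_limsup_iff_frequently_mem.1 hω)
      haveI : Infinite {n : ℕ // ω ∈ A n} := hmem.to_subtype
      refine Set.infinite_of_injective_forall_mem
        (f := fun n : {n : ℕ // ω ∈ A n} => X n.1) ?_ ?_
      · intro a b hab
        exact Subtype.ext (hXinj hab)
      · intro a
        obtain ⟨hadj, hcost⟩ := hAdj ω a.1 a.2 (Or.inl hW0')
        refine ⟨hadj, le_trans hcost ?_⟩
        apply mul_le_mul_of_nonneg_left ?_ ht₀0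
        apply Real.rpow_le_rpow (mul_nonneg (by linarith [hWt1 0 ω]) (by linarith)) ?_ hμ.le
        exact mul_le_mul_of_nonneg_right hW0' (by linarith)
    calc (0:ℝ≥0∞) < κa := hw₀
    _ = M.P Bev := (hfa 0).symm
    _ = M.P (Bev ∩ Filter.limsup A Filter.atTop) := hBE.symm
    _ ≤ M.P {ω | (M.cheapNbrs (fun w₁ w₂ => (w₁ * w₂) ^ μ) ω 0
        (t₀ * (w₀ * w₀) ^ μ)).Infinite} := measure_mono hsub2
end
end

section
/- Consider generalised scale-free percolation SFP on ℤ^d with vertex-weight distribution W ≥ 1 and a connection function h satisfying the edge-connection bounds with long-range parameter α ∈ (0,1]. Let [c,d] be an interval with P(W ∈ [c,d]) > 0. Then almost surely every vertex of ℤ^d has infinitely many neighbours in the graph whose weight lies in [c,d]. -/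
open MeasureTheory ProbabilityTheory Filter Set
open scoped ENNReal NNReal

noncomputable section

namespace SFPaux
open SFP

variable {ι Ω : Type*} [MeasurableSpace Ω] {μ : Measure Ω}

lemma pair_iIndepSet [IsProbabilityMeasure μ] {f : ι → Ω → ℝ}
    (hmeas : ∀ i, Measurable (f i))
    (hind : iIndepFun f μ)
    (i j : ℕ → ι) (hi : Function.Injective i) (hj : Function.Injective j)
    (hij : ∀ n m, i n ≠ j m)
    (A B : ℕ → Set ℝ) (hA : ∀ n, MeasurableSet (A n)) (hB : ∀ n, MeasurableSet (B n)) :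
    iIndepSet (fun n => f (i n) ⁻¹' A n ∩ f (j n) ⁻¹' B n) μ := by
  rw [iIndepSet_iff_meas_biInter
    (fun n => ((hmeas (i n)) (hA n)).inter ((hmeas (j n)) (hB n)))]
  intro S
  classical
  set sets : ι → Set ℝ := fun idx =>
    (⋂ n ∈ S.filter (fun n => i n = idx), A n) ∩
      (⋂ n ∈ S.filter (fun n => j n = idx), B n) with hsets
  have hsetsA : ∀ n ∈ S, sets (i n) = A n := by
    intro n hn
    have h1 : S.filter (fun m => i m = i n) = {n} := by
      ext m
      simp only [Finset.mem_filter, Finset.mem_singleton]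
      exact ⟨fun h => hi h.2, fun h => ⟨h ▸ hn, h ▸ rfl⟩⟩
    have h2 : S.filter (fun m => j m = i n) = ∅ := by
      ext m; simp only [Finset.mem_filter, Finset.notMem_empty, iff_false, not_and]
      exact fun _ h => (hij n m h.symm).elim
    simp only [hsets]
    rw [h1, h2]
    simp
  have hsetsB : ∀ n ∈ S, sets (j n) = B n := by
    intro n hn
    have h1 : S.filter (fun m => i m = j n) = ∅ := by
      ext m; simp only [Finset.mem_filter, Finset.notMem_empty, iff_false, not_and]
      exact fun _ h => (hij m n h).elim
    have h2 : S.filter (fun m => j m = j n) = {n} := by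
      ext m
      simp only [Finset.mem_filter, Finset.mem_singleton]
      exact ⟨fun h => hj h.2, fun h => ⟨h ▸ hn, h ▸ rfl⟩⟩
    simp only [hsets]
    rw [h1, h2]
    simp
  have hmeasSets : ∀ idx, MeasurableSet (sets idx) := by
    intro idx
    exact (MeasurableSet.biInter (Finset.countable_toSet _) (fun n _ => hA n)).inter
      (MeasurableSet.biInter (Finset.countable_toSet _) (fun n _ => hB n))
  have hdisj : Disjoint (S.image i) (S.image j) := by
    simp only [Finset.disjoint_left, Finset.mem_image]
    rintro idx ⟨n, _, rfl⟩ ⟨m, _, h⟩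
    exact hij n m h.symm
  set T : Finset ι := S.image i ∪ S.image j with hT
  have hInter : (⋂ n ∈ S, (f (i n) ⁻¹' A n ∩ f (j n) ⁻¹' B n)) = ⋂ idx ∈ T, f idx ⁻¹' sets idx := by
    ext ω
    simp only [Set.mem_iInter, Set.mem_inter_iff, Set.mem_preimage, hT, Finset.mem_union,
      Finset.mem_image]
    constructor
    · rintro h idx hidx
      rcases hidx with ⟨n, hn, rfl⟩ | ⟨n, hn, rfl⟩
      · rw [hsetsA n hn]; exact (h n hn).1
      · rw [hsetsB n hn]; exact (h n hn).2
    · intro h n hn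
      refine ⟨?_, ?_⟩
      · have := h (i n) (Or.inl ⟨n, hn, rfl⟩); rwa [hsetsA n hn] at this
      · have := h (j n) (Or.inr ⟨n, hn, rfl⟩); rwa [hsetsB n hn] at this
  rw [hInter, hind.measure_inter_preimage_eq_mul T (fun idx _ => hmeasSets idx)]
  rw [Finset.prod_union hdisj, Finset.prod_image (fun a _ b _ h => hi h),
    Finset.prod_image (fun a _ b _ h => hj h), ← Finset.prod_mul_distrib]
  refine Finset.prod_congr rfl fun n hn => ?_
  rw [hsetsA n hn, hsetsB n hn]
  exact ((hind.indepFun (hij n n)).measure_inter_preimage_eq_mul (A n) (B n)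
    (hA n) (hB n)).symm

lemma abs_le_znorm {d : ℕ} (x : Fin d → ℤ) (i : Fin d) : |((x i : ℝ))| ≤ znorm x := by
  unfold znorm rnorm
  rw [← Real.sqrt_sq_eq_abs]
  exact Real.sqrt_le_sqrt (Finset.single_le_sum (f := fun i => ((x i : ℝ))^2)
    (fun i _ => sq_nonneg _) (Finset.mem_univ i))

lemma znorm_nonneg {d : ℕ} (x : Fin d → ℤ) : 0 ≤ znorm x := Real.sqrt_nonneg _

lemma znorm_le {d : ℕ} (x : Fin d → ℤ) (M : ℝ) (hM : 0 ≤ M) (h : ∀ i, |((x i : ℝ))| ≤ M) :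
    znorm x ≤ Real.sqrt d * M := by
  unfold znorm rnorm
  have hsum : ∑ i, ((x i : ℝ))^2 ≤ (d : ℝ) * M^2 := by
    calc ∑ i, ((x i : ℝ))^2 ≤ ∑ _i : Fin d, M^2 :=
          Finset.sum_le_sum fun i _ => by
            rw [← sq_abs]; exact pow_le_pow_left₀ (abs_nonneg _) (h i) 2
      _ = (d : ℝ) * M^2 := by simp [Finset.sum_const, Finset.card_univ]
  calc Real.sqrt (∑ i, ((x i : ℝ))^2) ≤ Real.sqrt ((d : ℝ) * M^2) := Real.sqrt_le_sqrt hsum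
    _ = Real.sqrt d * M := by
        rw [Real.sqrt_mul (by positivity), Real.sqrt_sq hM]

lemma znorm_neg {d : ℕ} (x : Fin d → ℤ) : znorm (-x) = znorm x := by
  unfold znorm rnorm
  congr 1
  refine Finset.sum_congr rfl fun i _ => ?_
  simp only [Pi.neg_apply]
  push_cast
  ring

/-- Index type for the dyadic blocks. -/
def TT (d : ℕ) : Type := Σ k : ℕ, (Fin d → Fin (2^k))

instance (d : ℕ) : Countable (TT d) := by unfold TT; infer_instance

instance (d : ℕ) : Infinite (TT d) :=
  Infinite.of_injective (fun k => (⟨k, fun _ => ⟨0, by positivity⟩⟩ : TT d))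
    (fun a b h => congrArg Sigma.fst h)

/-- The dyadic point associated to an index. -/
def theta {d : ℕ} (p : TT d) : Fin d → ℤ := fun i => 2 ^ p.1 + 1 + (p.2 i : ℤ)

lemma theta_lb {d : ℕ} (p : TT d) (i : Fin d) : 2 ≤ theta p i := by
  have : (0 : ℤ) < 2 ^ p.1 := by positivity
  have h2 : (0 : ℤ) ≤ (p.2 i : ℤ) := Int.natCast_nonneg _
  unfold theta; omega

lemma theta_ub {d : ℕ} (p : TT d) (i : Fin d) : theta p i ≤ 2 ^ (p.1 + 1) := by
  have : ((p.2 i : ℕ) : ℤ) < 2 ^ p.1 := by exact_mod_cast Int.ofNat_lt.mpr (p.2 i).isLt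
  unfold theta
  have : (2:ℤ) ^ (p.1 + 1) = 2 ^ p.1 + 2 ^ p.1 := by ring
  omega

lemma theta_inj {d : ℕ} (hd : 1 ≤ d) : Function.Injective (theta (d := d)) := by
  rintro ⟨k, y⟩ ⟨k', y'⟩ h
  set i0 : Fin d := ⟨0, hd⟩
  have hco : ∀ i, (2:ℤ) ^ k + 1 + (y i : ℤ) = 2 ^ k' + 1 + (y' i : ℤ) := fun i => congrFun h i
  have key : ∀ a b : ℕ, a < b → ∀ (z : Fin d → Fin (2^a)) (z' : Fin d → Fin (2^b)),
      ((∀ i : Fin d, (2:ℤ) ^ a + 1 + (z i : ℤ) = 2 ^ b + 1 + (z' i : ℤ)) → False) := by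
    intro a b hab z z' hz
    have h1 : ((z i0 : ℕ) : ℤ) < 2 ^ a := by exact_mod_cast (z i0).isLt
    have h2 : (0:ℤ) ≤ ((z' i0 : ℕ) : ℤ) := Int.natCast_nonneg _
    have h3 : (2:ℤ) ^ a + 2 ^ a ≤ 2 ^ b := by
      have h4 : (2:ℤ) ^ (a+1) ≤ 2 ^ b := pow_le_pow_right₀ (by norm_num) hab
      have e : (2:ℤ) ^ (a + 1) = 2 ^ a + 2 ^ a := by ring
      omega
    have := hz i0
    omega
  have hk : k = k' := by
    rcases Nat.lt_trichotomy k k' with hlt | heq | hgt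
    · exact absurd (key k k' hlt y y' hco) not_false
    · exact heq
    · exact absurd (key k' k hgt y' y (fun i => (hco i).symm)) not_false
  subst hk
  have : y = y' := by
    funext i
    have := hco i
    have hval : ((y i : ℕ) : ℤ) = ((y' i : ℕ) : ℤ) := by omega
    exact Fin.ext (by exact_mod_cast hval)
  rw [this]

lemma znorm_theta_lb {d : ℕ} (hd : 1 ≤ d) (p : TT d) : 2 ≤ znorm (theta p) := by
  have h := abs_le_znorm (theta p) ⟨0, hd⟩
  have h2 := theta_lb p ⟨0, hd⟩
  have : (2:ℝ) ≤ |((theta p ⟨0, hd⟩ : ℤ) : ℝ)| := by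
    rw [abs_of_nonneg (by exact_mod_cast le_trans (by norm_num) h2)]
    exact_mod_cast h2
  linarith

lemma znorm_theta_ub {d : ℕ} (p : TT d) :
    znorm (theta p) ≤ Real.sqrt d * 2 ^ (p.1 + 1) := by
  refine znorm_le _ _ (by positivity) fun i => ?_
  have h1 := theta_lb p i
  have h2 := theta_ub p i
  rw [abs_of_nonneg (by exact_mod_cast le_trans (by norm_num) h1)]
  exact_mod_cast h2

lemma tsum_theta_top {d : ℕ} (hd : 1 ≤ d) (g : (Fin d → ℤ) → ℝ≥0∞) (c₀ : ℝ) (hc₀ : 0 < c₀)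
    (hg : ∀ p : TT d,
      ENNReal.ofReal (c₀ / (Real.sqrt d * 2 ^ (p.1 + 1)) ^ d) ≤ g (theta p)) :
    ∑' p : TT d, g (theta p) = ⊤ := by
  have hd0 : (0:ℝ) < Real.sqrt d := Real.sqrt_pos.2 (by exact_mod_cast hd)
  set C : ℝ := c₀ / ((Real.sqrt d) ^ d * 2 ^ d) with hC
  have hCpos : 0 < C := by positivity
  have hblock : ∀ k : ℕ, (ENNReal.ofReal C) ≤
      ∑' y : Fin d → Fin (2^k), g (theta ⟨k, y⟩) := by
    intro k
    have hterm : ∀ y : Fin d → Fin (2^k),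
        ENNReal.ofReal (c₀ / (Real.sqrt d * 2 ^ (k + 1)) ^ d) ≤ g (theta ⟨k, y⟩) :=
      fun y => hg ⟨k, y⟩
    calc (ENNReal.ofReal C)
        = (Fintype.card (Fin d → Fin (2^k)) : ℝ≥0∞) *
            ENNReal.ofReal (c₀ / (Real.sqrt d * 2 ^ (k + 1)) ^ d) := by
          rw [Fintype.card_fun, Fintype.card_fin, Fintype.card_fin]
          rw [← ENNReal.ofReal_natCast, ← ENNReal.ofReal_mul (by positivity)]
          congr 1
          push_cast
          rw [hC]
          rw [mul_pow, ← pow_mul, ← pow_mul]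
          field_simp
          ring
      _ ≤ ∑' y : Fin d → Fin (2^k), g (theta ⟨k, y⟩) := by
          rw [tsum_fintype]
          calc (Fintype.card (Fin d → Fin (2^k)) : ℝ≥0∞) *
                ENNReal.ofReal (c₀ / (Real.sqrt d * 2 ^ (k + 1)) ^ d)
              = ∑ _y : Fin d → Fin (2^k),
                  ENNReal.ofReal (c₀ / (Real.sqrt d * 2 ^ (k + 1)) ^ d) := by
                rw [Finset.sum_const, Finset.card_univ, nsmul_eq_mul]
            _ ≤ ∑ y ∈ Finset.univ, g (theta ⟨k, y⟩) :=
                Finset.sum_le_sum fun y _ => hterm y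
  have : (⊤ : ℝ≥0∞) ≤ ∑' p : TT d, g (theta p) := by
    rw [show (∑' p : TT d, g (theta p)) = ∑' k : ℕ, ∑' y : Fin d → Fin (2^k), g (theta ⟨k, y⟩)
      from ENNReal.tsum_sigma' _]
    calc (⊤ : ℝ≥0∞) = ∑' _k : ℕ, ENNReal.ofReal C := by
          rw [ENNReal.tsum_const_eq_top_of_ne_zero]
          simp [ENNReal.ofReal_eq_zero, not_le, hCpos]
      _ ≤ _ := ENNReal.tsum_le_tsum hblock
  exact top_le_iff.mp this

lemma lfun_pos (c₂ γ w : ℝ) : 0 < lfun c₂ γ w := Real.exp_pos _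

lemma lfun_antitone {c₂ γ : ℝ} (hc₂ : 0 ≤ c₂) (hγ : 0 ≤ γ) {w w' : ℝ}
    (hw : 1 ≤ w) (hww' : w ≤ w') : lfun c₂ γ w' ≤ lfun c₂ γ w := by
  unfold lfun
  apply Real.exp_le_exp.mpr
  have hlog : Real.log w ≤ Real.log w' := Real.log_le_log (by linarith) hww'
  have hlog0 : 0 ≤ Real.log w := Real.log_nonneg hw
  have : Real.log w ^ γ ≤ Real.log w' ^ γ := Real.rpow_le_rpow hlog0 hlog hγ
  nlinarith

lemma min_mul_le_min {K s : ℝ} (hK : 0 < K) (hs : 0 < s) (hs1 : s ≤ 1) :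
    min K 1 * s ≤ min K s := by
  rcases le_total K s with h | h
  · rw [min_eq_left h]
    calc min K 1 * s ≤ K * 1 := by
          apply mul_le_mul (min_le_left _ _) hs1 hs.le hK.le
      _ = K := mul_one K
  · rw [min_eq_right h]
    calc min K 1 * s ≤ 1 * s := by
          apply mul_le_mul_of_nonneg_right (min_le_right _ _) hs.le
      _ = s := one_mul s

lemma unif_prob {Ω : Type*} [MeasurableSpace Ω] (P : Measure Ω) (U : Ω → ℝ)
    (hU : Measurable U) (hmap : Measure.map U P = volume.restrict (Set.Icc 0 1))
    (t : ℝ) (h0 : 0 ≤ t) (h1 : t ≤ 1) : P (U ⁻¹' Set.Iic t) = ENNReal.ofReal t := by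
  rw [← Measure.map_apply hU measurableSet_Iic, hmap,
    Measure.restrict_apply measurableSet_Iic]
  have : Set.Iic t ∩ Set.Icc 0 1 = Set.Icc 0 t := by
    ext x
    simp only [Set.mem_inter_iff, Set.mem_Iic, Set.mem_Icc]
    constructor
    · rintro ⟨hx, hx0, _⟩; exact ⟨hx0, hx⟩
    · rintro ⟨hx0, hx⟩; exact ⟨hx, hx0, le_trans hx h1⟩
  rw [this, Real.volume_Icc, sub_zero]

lemma infinite_of_limsup {Ω : Type*} (E : ℕ → Set Ω) (ω : Ω) (hω : ω ∈ limsup E atTop) :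
    {n : ℕ | ω ∈ E n}.Infinite := by
  rw [mem_limsup_iff_frequently_mem, frequently_atTop] at hω
  apply Set.infinite_of_not_bddAbove
  rintro ⟨b, hb⟩
  obtain ⟨m, hm, hmem⟩ := hω (b + 1)
  have := hb hmem
  omega


lemma family_unif {d : ℕ} {Ω : Type*} [MeasurableSpace Ω] (M : Data d Ω)
    (e : Sym2 (Fin d → ℤ)) : M.family (Idx.unif e) = M.U e := rfl

lemma family_wt {d : ℕ} {Ω : Type*} [MeasurableSpace Ω] (M : Data d Ω)
    (v : Fin d → ℤ) : M.family (Idx.wt v) = M.Wt v := rfl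

lemma key_lemma {d : ℕ} (hd : 1 ≤ d) {Ω : Type*} [MeasurableSpace Ω] (M : Data d Ω)
    (hM : M.Valid) {a cl c₂ γ : ℝ} (ha0 : 0 < a) (ha1 : a ≤ 1) (hcl : 0 < cl)
    (hc₂ : 0 < c₂) (hγ : 0 < γ)
    (hlow : ∀ x : Fin d → ℝ, x ≠ 0 → ∀ w₁ w₂ : ℝ, 1 ≤ w₁ → 1 ≤ w₂ →
      cl * min (lfun c₂ γ w₁ * lfun c₂ γ w₂) ((w₁ * w₂ / rnorm x ^ d) ^ a) ≤ M.h x w₁ w₂)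
    (c e : ℝ) (hce : 0 < M.P (M.W ⁻¹' Set.Icc c e))
    (v : Fin d → ℤ) (m : ℝ) (hm : 1 ≤ m) :
    ∃ N : Set Ω, M.P N = 0 ∧ ∀ ω, ω ∉ N → M.Wt v ω ≤ m →
      {u | M.Adj ω v u ∧ M.Wt u ω ∈ Set.Icc c e}.Infinite := by
  classical
  obtain ⟨hP, hWmeas, hLmeas, hW1, hL0, hhrange, hfam, hWt1, hLen0, hWtmap, hUmap, hLenmap,
    hindep⟩ := hM
  haveI : IsProbabilityMeasure M.P := hP
  set ρ : ℝ≥0∞ := M.P (M.W ⁻¹' Set.Icc c e) with hρdef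
  -- the enumeration of dyadic points
  obtain ⟨Dinst⟩ := nonempty_denumerable (TT d)
  set eqv : ℕ ≃ TT d := (@Denumerable.eqv (TT d) Dinst).symm with heqv
  set pts : ℕ → (Fin d → ℤ) := fun n => theta (eqv n) with hpts
  have hpts_inj : Function.Injective pts := (theta_inj hd).comp eqv.injective
  set uu : ℕ → (Fin d → ℤ) := fun n => v + pts n with huu
  have huu_inj : Function.Injective uu := fun n n' h =>
    hpts_inj (add_right_injective v h)
  have hpts_i0 : ∀ n, 2 ≤ pts n ⟨0, hd⟩ := fun n => theta_lb (eqv n) ⟨0, hd⟩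
  have huu_ne : ∀ n, uu n ≠ v := by
    intro n h
    have h0 : pts n = 0 := by
      have := congrArg (fun w => w - v) h
      simpa [huu, add_sub_cancel_left] using this
    have := hpts_i0 n
    rw [h0] at this
    simp at this
  -- parameters
  set e' : ℝ := max e 1 with he'def
  have he'1 : 1 ≤ e' := le_max_right _ _
  set K : ℝ := lfun c₂ γ m * lfun c₂ γ e' with hKdef
  have hK : 0 < K := mul_pos (lfun_pos _ _ _) (lfun_pos _ _ _)
  set t : ℝ → ℝ := fun R => cl * min K ((1 / R ^ d) ^ a) with htdef
  set R : ℕ → ℝ := fun n => znorm (pts n) with hRdef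
  have hR2 : ∀ n, 2 ≤ R n := fun n => znorm_theta_lb hd (eqv n)
  have hRpos : ∀ n, 0 < R n := fun n => lt_of_lt_of_le (by norm_num) (hR2 n)
  have hRd1 : ∀ n, 1 ≤ R n ^ d := fun n => one_le_pow₀ (by linarith [hR2 n])
  have ht_pos : ∀ n, 0 < t (R n) := by
    intro n
    apply mul_pos hcl
    apply lt_min hK
    apply Real.rpow_pos_of_pos
    have := hRd1 n
    positivity
  -- the "reference vector" for showing t ≤ 1
  have hxr_ne : ∀ n, (fun i => ((pts n i : ℤ) : ℝ)) ≠ (0 : Fin d → ℝ) := by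
    intro n h
    have := congrFun h ⟨0, hd⟩
    have h2 := hpts_i0 n
    simp only [Pi.zero_apply] at this
    have : (pts n ⟨0, hd⟩ : ℝ) = 0 := this
    exact_mod_cast absurd this (by exact_mod_cast (by omega : pts n ⟨0, hd⟩ ≠ 0))
  have hrnorm_eq : ∀ n, rnorm (fun i => ((pts n i : ℤ) : ℝ)) = R n := fun n => rfl
  have hmin_mono : ∀ n (w₁ w₂ : ℝ), 1 ≤ w₁ → w₁ ≤ m → 1 ≤ w₂ → w₂ ≤ e' →
      t (R n) ≤ cl * min (lfun c₂ γ w₁ * lfun c₂ γ w₂) ((w₁ * w₂ / R n ^ d) ^ a) := by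
    intro n w₁ w₂ hw₁1 hw₁m hw₂1 hw₂e
    apply mul_le_mul_of_nonneg_left _ hcl.le
    apply min_le_min
    · exact mul_le_mul (lfun_antitone hc₂.le hγ.le hw₁1 hw₁m)
        (lfun_antitone hc₂.le hγ.le hw₂1 hw₂e) (lfun_pos _ _ _).le (lfun_pos _ _ _).le
    · apply Real.rpow_le_rpow (div_nonneg one_pos.le (pow_pos (hRpos n) d).le) _ ha0.le
      apply (div_le_div_iff_of_pos_right (pow_pos (hRpos n) d)).mpr
      nlinarith
  have ht_le1 : ∀ n, t (R n) ≤ 1 := by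
    intro n
    have hb := (hlow (fun i => ((pts n i : ℤ) : ℝ)) (hxr_ne n) m e' hm he'1)
    rw [hrnorm_eq n] at hb
    have hh1 := (hhrange (fun i => ((pts n i : ℤ) : ℝ)) m e').2
    calc t (R n) ≤ cl * min (lfun c₂ γ m * lfun c₂ γ e') ((m * e' / R n ^ d) ^ a) :=
          hmin_mono n m e' hm le_rfl he'1 le_rfl
      _ ≤ M.h (fun i => ((pts n i : ℤ) : ℝ)) m e' := hb
      _ ≤ 1 := hh1
  -- events
  set E : ℕ → Set Ω := fun n =>
    (M.family (Idx.unif s(v, uu n))) ⁻¹' Set.Iic (t (R n)) ∩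
      (M.family (Idx.wt (uu n))) ⁻¹' Set.Icc c e with hEdef
  have hEmeas : ∀ n, MeasurableSet (E n) :=
    fun n => ((hfam (Idx.unif s(v, uu n))) measurableSet_Iic).inter
      ((hfam (Idx.wt (uu n))) measurableSet_Icc)
  -- independence
  have hiid : iIndepSet E M.P := by
    have := pair_iIndepSet (μ := M.P) hfam hindep
      (fun n => Idx.unif s(v, uu n)) (fun n => Idx.wt (uu n))
      (fun n n' h => by
        have h2 : s(v, uu n) = s(v, uu n') := by injection h
        exact huu_inj (Sym2.congr_right.mp h2))
      (fun n n' h => huu_inj (by injection h))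
      (fun n n' h => by cases h)
      (fun n => Set.Iic (t (R n))) (fun _ => Set.Icc c e)
      (fun n => measurableSet_Iic) (fun _ => measurableSet_Icc)
    exact this
  -- probability of each event
  have hUprob : ∀ n, M.P ((M.family (Idx.unif s(v, uu n))) ⁻¹' Set.Iic (t (R n)))
      = ENNReal.ofReal (t (R n)) := by
    intro n
    apply unif_prob M.P _ (hfam (Idx.unif s(v, uu n)))
      (hUmap _ (by rw [Sym2.mk_isDiag_iff]; exact fun h => huu_ne n h.symm))
      _ (ht_pos n).le (ht_le1 n)
  have hWprob : ∀ n, M.P ((M.family (Idx.wt (uu n))) ⁻¹' Set.Icc c e) = ρ := by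
    intro n
    rw [hρdef, ← Measure.map_apply (hfam (Idx.wt (uu n))) measurableSet_Icc, family_wt, hWtmap (uu n),
      Measure.map_apply hWmeas measurableSet_Icc]
  have hEprob : ∀ n, M.P (E n) = ENNReal.ofReal (t (R n)) * ρ := by
    intro n
    rw [hEdef]
    have := (hindep.indepFun
      (show Idx.unif s(v, uu n) ≠ Idx.wt (uu n) from fun h => by cases h))
      |>.measure_inter_preimage_eq_mul (Set.Iic (t (R n))) (Set.Icc c e)
      measurableSet_Iic measurableSet_Icc
    rw [this, hUprob n, hWprob n]
  -- divergence of the sum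
  have hts : ∑' n, ENNReal.ofReal (t (R n)) = ⊤ := by
    set g : (Fin d → ℤ) → ℝ≥0∞ := fun x => ENNReal.ofReal (t (znorm x)) with hg
    have : ∑' n, ENNReal.ofReal (t (R n)) = ∑' p : TT d, g (theta p) := by
      rw [← Equiv.tsum_eq eqv (fun p => g (theta p))]
    rw [this]
    apply tsum_theta_top hd g (cl * min K 1) (mul_pos hcl (lt_min hK one_pos))
    intro p
    rw [hg]
    apply ENNReal.ofReal_le_ofReal
    set Rp : ℝ := znorm (theta p) with hRp
    have hRp2 : 2 ≤ Rp := znorm_theta_lb hd p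
    have hRppos : 0 < Rp := by linarith
    have hRpd1 : 1 ≤ Rp ^ d := one_le_pow₀ (by linarith)
    set Rk : ℝ := (Real.sqrt d * 2 ^ (p.1 + 1)) ^ d with hRk
    have hRkge : Rp ^ d ≤ Rk := pow_le_pow_left₀ (znorm_nonneg _) (znorm_theta_ub p) d
    have hRk1 : 1 ≤ Rk := le_trans hRpd1 hRkge
    have hRkpos : 0 < Rk := by linarith
    have h1 : (1 : ℝ) / Rk ≤ 1 / Rp ^ d := one_div_le_one_div_of_le (by linarith) hRkge
    have h2 : (1 : ℝ) / Rp ^ d ≤ (1 / Rp ^ d) ^ a := by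
      have hbpos : 0 < (1:ℝ) / Rp ^ d := by positivity
      have hble : (1:ℝ) / Rp ^ d ≤ 1 := by
        rw [div_le_one (by positivity)]; exact hRpd1
      calc (1 : ℝ) / Rp ^ d = (1 / Rp ^ d) ^ (1:ℝ) := (Real.rpow_one _).symm
        _ ≤ (1 / Rp ^ d) ^ a := Real.rpow_le_rpow_of_exponent_ge hbpos hble ha1
    calc cl * min K 1 / Rk = cl * (min K 1 * (1 / Rk)) := by ring
      _ ≤ cl * min K (1 / Rk) :=
          mul_le_mul_of_nonneg_left (min_mul_le_min hK (by positivity)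
            (by rw [div_le_one hRkpos]; exact hRk1)) hcl.le
      _ ≤ cl * min K ((1 / Rp ^ d) ^ a) := by
          apply mul_le_mul_of_nonneg_left _ hcl.le
          exact min_le_min le_rfl (le_trans h1 h2)
      _ = t Rp := rfl
  have hsum : ∑' n, M.P (E n) = ⊤ := by
    calc ∑' n, M.P (E n) = ∑' n, ENNReal.ofReal (t (R n)) * ρ := tsum_congr hEprob
      _ = (∑' n, ENNReal.ofReal (t (R n))) * ρ := ENNReal.tsum_mul_right
      _ = ⊤ := by rw [hts]; exact ENNReal.top_mul hce.ne'
  -- Borel-Cantelli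
  have hone : M.P (limsup E atTop) = 1 :=
    ProbabilityTheory.measure_limsup_eq_one hEmeas hiid hsum
  have hlimmeas : MeasurableSet (limsup E atTop) := by
    rw [limsup_eq_iInf_iSup_of_nat]
    exact MeasurableSet.iInter fun n => MeasurableSet.iUnion fun i =>
      MeasurableSet.iUnion fun _ => hEmeas i
  refine ⟨(limsup E atTop)ᶜ, ?_, ?_⟩
  · rw [measure_compl hlimmeas (measure_ne_top _ _), hone, measure_univ]
    simp
  · intro ω hω hWv
    have hωlim : ω ∈ limsup E atTop := not_not.mp hω
    have hS : {n : ℕ | ω ∈ E n}.Infinite := infinite_of_limsup E ω hωlim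
    have himg : uu '' {n : ℕ | ω ∈ E n} ⊆ {u | M.Adj ω v u ∧ M.Wt u ω ∈ Set.Icc c e} := by
      rintro _ ⟨n, hn, rfl⟩
      obtain ⟨hUn, hWn⟩ := hn
      have hWn' : M.Wt (uu n) ω ∈ Set.Icc c e := hWn
      have hsub : v - uu n = -(pts n) := by
        rw [huu]; exact sub_add_cancel_left v (pts n)
      have hznorm : znorm (v - uu n) = R n := by rw [hsub, znorm_neg]
      have hxr'_eq : (fun i => (((v - uu n) i : ℤ) : ℝ))
          = fun i => ((((-(pts n)) i : ℤ) : ℝ)) := by rw [hsub]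
      have hxr'_ne : (fun i => (((v - uu n) i : ℤ) : ℝ)) ≠ (0 : Fin d → ℝ) := by
        rw [hxr'_eq]
        intro h
        have := congrFun h ⟨0, hd⟩
        simp only [Pi.neg_apply, Pi.zero_apply, Int.cast_neg, neg_eq_zero] at this
        have h2 := hpts_i0 n
        have : (pts n ⟨0, hd⟩ : ℝ) = 0 := this
        exact_mod_cast absurd this (by exact_mod_cast (by omega : pts n ⟨0, hd⟩ ≠ 0))
      have hrn : rnorm (fun i => (((v - uu n) i : ℤ) : ℝ)) = R n := by
        show znorm (v - uu n) = R n
        exact hznorm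
      have hw₂mem : (1 : ℝ) ≤ M.Wt (uu n) ω := hWt1 _ _
      have hw₂e : M.Wt (uu n) ω ≤ e' := le_trans hWn'.2 (le_max_left _ _)
      have hb := hlow (fun i => (((v - uu n) i : ℤ) : ℝ)) hxr'_ne
        (M.Wt v ω) (M.Wt (uu n) ω) (hWt1 _ _) hw₂mem
      rw [hrn] at hb
      have hUle : M.U s(v, uu n) ω ≤ M.h (fun i => (((v - uu n) i : ℤ) : ℝ))
          (M.Wt v ω) (M.Wt (uu n) ω) := by
        apply le_trans hUn
        exact le_trans (hmin_mono n (M.Wt v ω) (M.Wt (uu n) ω)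
          (hWt1 _ _) hWv hw₂mem hw₂e) hb
      refine ⟨Or.inr ⟨?_, hUle⟩, hWn'⟩
      rw [hznorm]
      linarith [hR2 n]
    exact Set.Infinite.mono himg (hS.image (huu_inj.injOn))

end SFPaux


/-- For SFP on `ℤ^d` with weight distribution `W ≥ 1` and long-range
parameter `α ∈ (0,1]`: if `[c,e]` is an interval with `P(W ∈ [c,e]) > 0`, then almost
surely every vertex of `ℤ^d` has infinitely many neighbours whose weight lies in
`[c,e]`. -/
theorem sfp_infinitely_many_neighbours
    {d : ℕ} (hd : 1 ≤ d) {Ω : Type*} [MeasurableSpace Ω] (M : SFP.Data d Ω)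
    (hM : M.Valid)
    (α : ℝ≥0∞) (hα0 : 0 < α) (hα1 : α ≤ 1) (hEB : SFP.EdgeBounds M.h α)
    (c e : ℝ) (hce : 0 < M.P {ω | M.W ω ∈ Set.Icc c e}) :
    M.P {ω | ∀ v : Fin d → ℤ,
        {u | M.Adj ω v u ∧ M.Wt u ω ∈ Set.Icc c e}.Infinite} = 1 := by
  classical
  obtain ⟨γ, cl, cu, cl1, cu1, c₂, hγ, hcl, hcu, hcl1, hcu1, hc₂, hcase⟩ := hEB
  have hα_ne_top : α ≠ ⊤ := by
    intro h
    rw [h] at hα1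
    exact absurd hα1 (by simp)
  have hlow : ∀ x : Fin d → ℝ, x ≠ 0 → ∀ w₁ w₂ : ℝ, 1 ≤ w₁ → 1 ≤ w₂ →
      cl * min (SFP.lfun c₂ γ w₁ * SFP.lfun c₂ γ w₂)
        ((w₁ * w₂ / SFP.rnorm x ^ d) ^ α.toReal) ≤ M.h x w₁ w₂ := by
    rcases hcase with ⟨_, hb⟩ | ⟨htop, _⟩
    · exact fun x hx w₁ w₂ h1 h2 => (hb x hx w₁ w₂ h1 h2).1
    · exact absurd htop hα_ne_top
  have ha0 : 0 < α.toReal := ENNReal.toReal_pos hα0.ne' hα_ne_top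
  have ha1 : α.toReal ≤ 1 := by
    have := ENNReal.toReal_mono (by simp) hα1
    simpa using this
  have hce' : 0 < M.P (M.W ⁻¹' Set.Icc c e) := hce
  haveI : IsProbabilityMeasure M.P := hM.1
  -- bad sets
  have key := fun (v : Fin d → ℤ) (m : ℕ) =>
    SFPaux.key_lemma hd M hM ha0 ha1 hcl hc₂ hγ.1 hlow c e hce' v (m + 1 : ℝ)
      (by exact_mod_cast Nat.le_add_left 1 m)
  choose N hN0 hNprop using key
  set Target : Set Ω := {ω | ∀ v : Fin d → ℤ,
    {u | M.Adj ω v u ∧ M.Wt u ω ∈ Set.Icc c e}.Infinite} with hTarget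
  have hsub : Targetᶜ ⊆ ⋃ (v : Fin d → ℤ) (m : ℕ), N v m := by
    intro ω hω
    rw [Set.mem_compl_iff, hTarget, Set.mem_setOf_eq] at hω
    push_neg at hω
    obtain ⟨v, hv⟩ := hω
    obtain ⟨m, hm⟩ := exists_nat_ge (M.Wt v ω)
    have : ω ∈ N v m := by
      by_contra hn
      exact (hNprop v m ω hn (by linarith)) hv
    exact Set.mem_iUnion.mpr ⟨v, Set.mem_iUnion.mpr ⟨m, this⟩⟩
  have hB0 : M.P (⋃ (v : Fin d → ℤ) (m : ℕ), N v m) = 0 :=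
    measure_iUnion_null fun v => measure_iUnion_null fun m => hN0 v m
  have hle : M.P Target ≤ 1 := prob_le_one
  have hge : 1 ≤ M.P Target := by
    have huniv : (Set.univ : Set Ω) ⊆ Target ∪ ⋃ (v : Fin d → ℤ) (m : ℕ), N v m := by
      intro ω _
      by_cases h : ω ∈ Target
      · exact Or.inl h
      · exact Or.inr (hsub h)
    calc (1 : ℝ≥0∞) = M.P Set.univ := (measure_univ).symm
      _ ≤ M.P (Target ∪ ⋃ (v : Fin d → ℤ) (m : ℕ), N v m) := measure_mono huniv
      _ ≤ M.P Target + M.P (⋃ (v : Fin d → ℤ) (m : ℕ), N v m) := measure_union_le _ _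
      _ = M.P Target := by rw [hB0, add_zero]
  exact le_antisymm hle hge
end
end
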